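/- Let ν be a non-degenerate probability measure on ℝ with support bounded from above and α > 0 such that the measure (ν^{⊎1/α})^{⊞α} is well defined. Then (ν^{⊎1/α})^{⊞α} has support bounded from above and its pseudo-variance function satisfies, for m in a right neighborhood of m₀(ν): 𝕍_{(ν^{⊎1/α})^{⊞α}}(m) = 𝕍_ν(m) + (1 − 1/α)m². If moreover the mean m₀ = m₀(ν) is finite, the variance functions exist and V_{(ν^{⊎1/α})^{⊞α}}(m) = V_ν(m) + (1 − 1/α)m(m − m₀) for m in a right neighborhood of m₀. -/

import Mathlib

open MeasureTheory Filter Topology Set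
open scoped ENNReal

/-- The Cauchy transform `G_ν(z) = ∫ 1/(z-x) dν(x)` of a measure on `ℝ`, for real `z`. -/
noncomputable def cauchyT (ν : Measure ℝ) (z : ℝ) : ℝ := ∫ x, (z - x)⁻¹ ∂ν

/-- The K-transform (self-energy) `K_ν(z) = z - 1/G_ν(z)`. -/
noncomputable def kT (ν : Measure ℝ) (z : ℝ) : ℝ := z - (cauchyT ν z)⁻¹

/-- The Cauchy transform at a complex argument. -/
noncomputable def cauchyTC (ν : Measure ℝ) (z : ℂ) : ℂ := ∫ x, (z - (x : ℂ))⁻¹ ∂ν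

/-- The K-transform at a complex argument. -/
noncomputable def kTC (ν : Measure ℝ) (z : ℂ) : ℂ := z - (cauchyTC ν z)⁻¹

/-- `M_ν(θ) = ∫ 1/(1-θx) dν(x)`. -/
noncomputable def Mgen (ν : Measure ℝ) (θ : ℝ) : ℝ := ∫ x, (1 - θ * x)⁻¹ ∂ν

/-- The mean of `P_{(θ,ν)}`: `k_ν(θ) = (M_ν(θ) - 1)/(θ M_ν(θ))`. -/
noncomputable def kMean (ν : Measure ℝ) (θ : ℝ) : ℝ := (Mgen ν θ - 1) / (θ * Mgen ν θ)

/-- `B(ν) = max(0, sup supp(ν)) = 1/θ₊`. -/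
noncomputable def Bv (ν : Measure ℝ) : ℝ := max 0 (sInf {b : ℝ | ν (Set.Ioi b) = 0})

/-- Pseudo-variance function `𝕍_ν(m) = m (1/ψ_ν(m) - m)`, expressed through the
inverse `ψ` of the mean parametrization `k_ν`. -/
noncomputable def pseudoVar (ψ : ℝ → ℝ) (m : ℝ) : ℝ := m * ((ψ m)⁻¹ - m)

lemma ae_le_of_Ioi_null {ρ : Measure ℝ} {b : ℝ} (hb : ρ (Set.Ioi b) = 0) :
    ∀ᵐ x ∂ρ, x ≤ b := by
  rw [MeasureTheory.ae_iff]
  convert hb using 2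
  ext x; simp [not_le]

lemma exists_Ioi_pos (ρ : Measure ℝ) [IsProbabilityMeasure ρ] :
    ∃ n : ℕ, 0 < ρ (Set.Ioi (-(n:ℝ))) := by
  by_contra h
  push_neg at h
  simp only [le_zero_iff] at h
  have : ρ (⋃ n : ℕ, Set.Ioi (-(n:ℝ))) = 0 := by
    refine measure_iUnion_null h
  have huniv : (⋃ n : ℕ, Set.Ioi (-(n:ℝ))) = Set.univ := by
    ext x; simp only [Set.mem_iUnion, Set.mem_Ioi, Set.mem_univ, iff_true]
    obtain ⟨n, hn⟩ := exists_nat_gt (-x)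
    exact ⟨n, by linarith⟩
  rw [huniv] at this
  simp [measure_univ] at this

lemma bddBelow_null_set (ρ : Measure ℝ) [IsProbabilityMeasure ρ] :
    BddBelow {c : ℝ | ρ (Set.Ioi c) = 0} := by
  obtain ⟨n, hn⟩ := exists_Ioi_pos ρ
  refine ⟨-(n:ℝ), fun c hc => ?_⟩
  by_contra h
  push_neg at h
  have : ρ (Set.Ioi (-(n:ℝ))) ≤ ρ (Set.Ioi c) := measure_mono (Set.Ioi_subset_Ioi h.le)
  rw [hc] at this
  exact absurd (le_zero_iff.mp this) hn.ne'

lemma Bv_le {ρ : Measure ℝ} [IsProbabilityMeasure ρ] {c : ℝ} (hc : ρ (Set.Ioi c) = 0) :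
    Bv ρ ≤ max 0 c := by
  have : sInf {b : ℝ | ρ (Set.Ioi b) = 0} ≤ c := csInf_le (bddBelow_null_set ρ) hc
  exact max_le_max le_rfl this

lemma Bv_nonneg (ρ : Measure ℝ) : 0 ≤ Bv ρ := le_max_left _ _
lemma integrable_inv_shift {ρ : Measure ℝ} [IsFiniteMeasure ρ] {c t : ℝ}
    (hae : ∀ᵐ x ∂ρ, x ≤ c) (ht : c < t) :
    Integrable (fun x : ℝ => (t - x)⁻¹) ρ := by
  refine Integrable.mono' (integrable_const ((t - c)⁻¹)) ?_ ?_
  · exact ((measurable_const.sub measurable_id).inv).aestronglyMeasurable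
  · filter_upwards [hae] with x hx
    have h1 : 0 < t - x := by linarith
    have h2 : 0 < t - c := by linarith
    rw [Real.norm_eq_abs, abs_of_pos (inv_pos.mpr h1)]
    exact inv_anti₀ h2 (by linarith)

lemma exists_mass_Icc (ρ : Measure ℝ) [IsProbabilityMeasure ρ] {c : ℝ}
    (hc : ρ (Set.Ioi c) = 0) :
    ∃ L : ℝ, 0 < L ∧ -L < c ∧ (1/2 : ℝ≥0∞) ≤ ρ (Set.Icc (-L) c) := by
  have huniv : (⋃ n : ℕ, Set.Ici (-(n:ℝ))) = Set.univ := by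
    ext x; simp only [Set.mem_iUnion, Set.mem_Ici, Set.mem_univ, iff_true]
    obtain ⟨n, hn⟩ := exists_nat_gt (-x)
    exact ⟨n, by linarith⟩
  have hmono : Monotone fun n : ℕ => Set.Ici (-(n:ℝ)) := by
    intro a b hab
    exact Set.Ici_subset_Ici.mpr (by exact_mod_cast neg_le_neg (by exact_mod_cast hab))
  have htends := MeasureTheory.tendsto_measure_iUnion_atTop (μ := ρ) hmono
  rw [huniv, measure_univ] at htends
  have hev : ∀ᶠ n : ℕ in atTop, (1/2 : ℝ≥0∞) < ρ (Set.Ici (-(n:ℝ))) :=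
    htends.eventually (lt_mem_nhds (by norm_num))
  obtain ⟨n, hn, hn2⟩ := (hev.and (eventually_gt_atTop ⌈|c| + 1⌉₊)).exists
  refine ⟨(n:ℝ), ?_, ?_, ?_⟩
  · have : (0:ℕ) < n := lt_of_le_of_lt (Nat.zero_le _) hn2
    exact_mod_cast this
  · have : |c| + 1 ≤ (n:ℝ) := le_trans (Nat.le_ceil _) (by exact_mod_cast hn2.le)
    have := neg_abs_le c
    linarith
  · have hsub : Set.Ici (-(n:ℝ)) ⊆ Set.Icc (-(n:ℝ)) c ∪ Set.Ioi c := by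
      intro x hx
      rcases le_or_gt x c with h | h
      · exact Or.inl ⟨hx, h⟩
      · exact Or.inr h
    calc (1/2 : ℝ≥0∞) ≤ ρ (Set.Ici (-(n:ℝ))) := hn.le
      _ ≤ ρ (Set.Icc (-(n:ℝ)) c ∪ Set.Ioi c) := measure_mono hsub
      _ ≤ ρ (Set.Icc (-(n:ℝ)) c) + ρ (Set.Ioi c) := measure_union_le _ _
      _ = ρ (Set.Icc (-(n:ℝ)) c) := by rw [hc, add_zero]

lemma cauchyT_pos {ρ : Measure ℝ} [IsProbabilityMeasure ρ] {c t : ℝ}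
    (hc : ρ (Set.Ioi c) = 0) (ht : c < t) : 0 < cauchyT ρ t := by
  obtain ⟨L, hL0, hLc, hLmass⟩ := exists_mass_Icc ρ hc
  have hae := ae_le_of_Ioi_null hc
  have hint := integrable_inv_shift hae ht
  have htL : 0 < t + L := by linarith
  have h1 : (t + L)⁻¹ * (ρ (Set.Icc (-L) c)).toReal ≤ ∫ x in Set.Icc (-L) c, (t - x)⁻¹ ∂ρ := by
    refine MeasureTheory.setIntegral_ge_of_const_le_real measurableSet_Icc (measure_ne_top _ _) ?_
      hint.integrableOn
    intro x hx
    have h2 : 0 < t - x := by cases hx; linarith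
    exact inv_anti₀ h2 (by cases hx; linarith)
  have h2 : ∫ x in Set.Icc (-L) c, (t - x)⁻¹ ∂ρ ≤ cauchyT ρ t := by
    refine MeasureTheory.setIntegral_le_integral hint ?_
    filter_upwards [hae] with x hx
    have : 0 < t - x := by linarith
    positivity
  have h3 : (0:ℝ) < (ρ (Set.Icc (-L) c)).toReal := by
    have := ENNReal.toReal_mono (measure_ne_top _ _) hLmass
    norm_num at this
    linarith
  have h4 : 0 < (t + L)⁻¹ * (ρ (Set.Icc (-L) c)).toReal := by positivity
  linarith

lemma cauchyT_le {ρ : Measure ℝ} [IsProbabilityMeasure ρ] {c t : ℝ}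
    (hc : ρ (Set.Ioi c) = 0) (ht : c < t) : cauchyT ρ t ≤ (t - c)⁻¹ := by
  have hae := ae_le_of_Ioi_null hc
  have : cauchyT ρ t ≤ ∫ _ : ℝ, (t - c)⁻¹ ∂ρ := by
    refine integral_mono_ae (integrable_inv_shift hae ht) (integrable_const _) ?_
    filter_upwards [hae] with x hx
    exact inv_anti₀ (by linarith) (by linarith)
  simpa using this
namespace CTaux

lemma sub_real_ne_zero {z : ℂ} (hz : 0 < z.im) (x : ℝ) : z - (x:ℂ) ≠ 0 := by
  intro h
  have := congrArg Complex.im h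
  simp at this
  exact hz.ne' this

lemma normSq_sub_real (t y x : ℝ) :
    Complex.normSq ((t:ℂ) + (y:ℂ) * Complex.I - (x:ℂ)) = (t - x)^2 + y^2 := by
  simp [Complex.normSq_apply]
  ring

lemma z_im (t y : ℝ) : ((t:ℂ) + (y:ℂ) * Complex.I).im = y := by simp

lemma z_re (t y : ℝ) : ((t:ℂ) + (y:ℂ) * Complex.I).re = t := by simp

lemma integrable_inv_complex {ρ : Measure ℝ} [IsFiniteMeasure ρ] {z : ℂ} (hz : 0 < z.im) :
    Integrable (fun x : ℝ => (z - (x:ℂ))⁻¹) ρ := by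
  refine Integrable.mono' (integrable_const ((z.im)⁻¹)) ?_ ?_
  · exact (Continuous.aestronglyMeasurable
      ((continuous_const.sub Complex.continuous_ofReal).inv₀ (sub_real_ne_zero hz)))
  · refine Eventually.of_forall fun x => ?_
    rw [norm_inv]
    refine inv_anti₀ hz ?_
    calc z.im = |(z - (x:ℂ)).im| := by simp [abs_of_pos hz]
      _ ≤ ‖z - (x:ℂ)‖ := Complex.abs_im_le_norm _

lemma inv_im_eq (z : ℂ) (x : ℝ) :
    ((z - (x:ℂ))⁻¹).im = -(z.im / Complex.normSq (z - (x:ℂ))) := by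
  rw [Complex.inv_im]
  have : (z - (x:ℂ)).im = z.im := by simp
  rw [this]
  ring

lemma normSq_ge {z : ℂ} (x : ℝ) : z.im^2 ≤ Complex.normSq (z - (x:ℂ)) := by
  have him : (z - (x:ℂ)).im = z.im := by simp
  rw [Complex.normSq_apply, him]
  nlinarith [sq_nonneg (z - (x:ℂ)).re]

lemma poisson_pos {z : ℂ} (hz : 0 < z.im) (x : ℝ) :
    0 < z.im / Complex.normSq (z - (x:ℂ)) := by
  have h1 := normSq_ge (z := z) x
  have h2 : (0:ℝ) < z.im^2 := pow_pos hz 2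
  exact div_pos hz (by linarith)

lemma integrable_poisson {ρ : Measure ℝ} [IsFiniteMeasure ρ] {z : ℂ} (hz : 0 < z.im) :
    Integrable (fun x : ℝ => z.im / Complex.normSq (z - (x:ℂ))) ρ := by
  refine Integrable.mono' (integrable_const ((z.im)⁻¹)) ?_ ?_
  · refine Continuous.aestronglyMeasurable ?_
    refine continuous_const.div (Complex.continuous_normSq.comp
      (continuous_const.sub Complex.continuous_ofReal)) fun x => ?_
    have := normSq_ge (z := z) x
    nlinarith
  · refine Eventually.of_forall fun x => ?_
    have h1 := normSq_ge (z := z) x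
    have h2 : (0:ℝ) < z.im^2 := pow_pos hz 2
    rw [Real.norm_eq_abs, abs_of_pos (poisson_pos hz x)]
    rw [div_le_iff₀ (by linarith)]
    rw [inv_mul_eq_div, le_div_iff₀ hz]
    nlinarith

lemma im_cauchyTC {ρ : Measure ℝ} [IsFiniteMeasure ρ] {z : ℂ} (hz : 0 < z.im) :
    (cauchyTC ρ z).im = -∫ x, z.im / Complex.normSq (z - (x:ℂ)) ∂ρ := by
  have h1 := integral_im (μ := ρ) (𝕜 := ℂ)
    (f := fun x : ℝ => (z - (x:ℂ))⁻¹) (integrable_inv_complex hz)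
  simp only [RCLike.im_to_complex] at h1
  rw [cauchyTC, ← h1, ← MeasureTheory.integral_neg]
  congr 1
  ext x
  simpa using inv_im_eq z x

lemma im_cauchyTC_neg {ρ : Measure ℝ} [IsProbabilityMeasure ρ] {z : ℂ} (hz : 0 < z.im) :
    (cauchyTC ρ z).im < 0 := by
  rw [im_cauchyTC hz]
  simp only [neg_lt, neg_zero]
  rw [MeasureTheory.integral_pos_iff_support_of_nonneg
    (fun x => (poisson_pos hz x).le) (integrable_poisson hz)]
  have : Function.support (fun x : ℝ => z.im / Complex.normSq (z - (x:ℂ))) = Set.univ := by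
    ext x; simp only [Function.mem_support, Set.mem_univ, iff_true]
    exact (poisson_pos hz x).ne'
  rw [this, measure_univ]
  norm_num

lemma cauchyTC_ne_zero {ρ : Measure ℝ} [IsProbabilityMeasure ρ] {z : ℂ} (hz : 0 < z.im) :
    cauchyTC ρ z ≠ 0 := by
  intro h
  have := im_cauchyTC_neg (ρ := ρ) hz
  rw [h] at this
  simp at this

end CTaux
namespace CTaux

lemma ball_bound {ρ : Measure ℝ} [IsProbabilityMeasure ρ] (t : ℝ) {y : ℝ} (hy : 0 < y) :
    (ρ (Set.Ioo (t - y) (t + y))).toReal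
      ≤ 2 * y * (-(cauchyTC ρ ((t:ℂ) + (y:ℂ) * Complex.I)).im) := by
  set z : ℂ := (t:ℂ) + (y:ℂ) * Complex.I with hzdef
  have hz : 0 < z.im := by rw [z_im]; exact hy
  have him : -(cauchyTC ρ z).im = ∫ x, z.im / Complex.normSq (z - (x:ℂ)) ∂ρ := by
    rw [im_cauchyTC hz]; ring
  have h1 : (2*y)⁻¹ * (ρ (Set.Ioo (t - y) (t + y))).toReal
      ≤ ∫ x in Set.Ioo (t - y) (t + y), z.im / Complex.normSq (z - (x:ℂ)) ∂ρ := by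
    refine MeasureTheory.setIntegral_ge_of_const_le_real measurableSet_Ioo (measure_ne_top _ _)
      ?_ (integrable_poisson hz).integrableOn
    intro x hx
    rw [hzdef, normSq_sub_real, z_im]
    have h2 : (t - x)^2 < y^2 := by
      obtain ⟨ha, hb⟩ := hx
      nlinarith
    rw [le_div_iff₀ (by positivity)]
    rw [inv_mul_le_iff₀ (by positivity)]
    nlinarith
  have h2 : ∫ x in Set.Ioo (t - y) (t + y), z.im / Complex.normSq (z - (x:ℂ)) ∂ρ
      ≤ ∫ x, z.im / Complex.normSq (z - (x:ℂ)) ∂ρ := by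
    refine MeasureTheory.setIntegral_le_integral (integrable_poisson hz) ?_
    exact Eventually.of_forall fun x => (poisson_pos hz x).le
  rw [him]
  rw [inv_mul_le_iff₀ (by positivity)] at h1
  calc (ρ (Set.Ioo (t - y) (t + y))).toReal
      ≤ 2*y*∫ x in Set.Ioo (t - y) (t + y), z.im / Complex.normSq (z - (x:ℂ)) ∂ρ := h1
    _ ≤ 2*y*∫ x, z.im / Complex.normSq (z - (x:ℂ)) ∂ρ :=
        mul_le_mul_of_nonneg_left h2 (by positivity)

lemma inv_re_eq (z : ℂ) (x : ℝ) :
    ((z - (x:ℂ))⁻¹).re = (z.re - x) / Complex.normSq (z - (x:ℂ)) := by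
  have : (z - (x:ℂ)).re = z.re - x := by simp
  rw [Complex.inv_re, this]

lemma integrable_Q {ρ : Measure ℝ} [IsFiniteMeasure ρ] {z : ℂ} (hz : 0 < z.im) :
    Integrable (fun x : ℝ => (z.re - x) / Complex.normSq (z - (x:ℂ))) ρ := by
  have h := (integrable_inv_complex (ρ := ρ) hz).re
  refine h.congr (Eventually.of_forall fun x => ?_)
  exact (inv_re_eq z x)

lemma re_cauchyTC {ρ : Measure ℝ} [IsFiniteMeasure ρ] {z : ℂ} (hz : 0 < z.im) :
    (cauchyTC ρ z).re = ∫ x, (z.re - x) / Complex.normSq (z - (x:ℂ)) ∂ρ := by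
  have h1 := integral_re (μ := ρ) (𝕜 := ℂ)
    (f := fun x : ℝ => (z - (x:ℂ))⁻¹) (integrable_inv_complex hz)
  simp only [RCLike.re_to_complex] at h1
  rw [cauchyTC, ← h1]
  congr 1
  ext x
  exact inv_re_eq z x

end CTaux
namespace CTaux

lemma nu_bounds {ν : Measure ℝ} [IsProbabilityMeasure ν] {b L t y R : ℝ}
    (hae : ∀ᵐ x ∂ν, x ≤ b) (hL0 : 0 < L) (hLb : -L < b)
    (hmass : (1/2:ℝ) ≤ (ν (Set.Icc (-L) b)).toReal)
    (ht : b + 1 ≤ t) (htR : t ≤ R) (hy : 0 < y) (hy1 : y ≤ 1) :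
    |(cauchyTC ν ((t:ℂ) + (y:ℂ) * Complex.I)).im| ≤ y ∧
    1/(4*(R+L)^2) ≤ (cauchyTC ν ((t:ℂ) + (y:ℂ) * Complex.I)).re ∧
    (cauchyTC ν ((t:ℂ) + (y:ℂ) * Complex.I)).re * (t - b) ≤ 1 := by
  set z : ℂ := (t:ℂ) + (y:ℂ) * Complex.I with hzdef
  have hz : 0 < z.im := by rw [z_im]; exact hy
  have hzre : z.re = t := z_re t y
  have hRL : 1 ≤ R + L := by linarith
  refine ⟨?_, ?_, ?_⟩
  · -- |Im| ≤ y
    rw [im_cauchyTC hz, abs_neg, abs_of_nonneg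
      (integral_nonneg fun x => (poisson_pos hz x).le)]
    have : ∫ x, z.im / Complex.normSq (z - (x:ℂ)) ∂ν ≤ ∫ _ : ℝ, y ∂ν := by
      refine integral_mono_ae (integrable_poisson hz) (integrable_const _) ?_
      filter_upwards [hae] with x hx
      rw [hzdef, normSq_sub_real, z_im]
      rw [div_le_iff₀ (by nlinarith)]
      have h6 : 1 ≤ (t-x)^2 := by nlinarith
      have h7 : (0:ℝ) ≤ y * ((t-x)^2 - 1) := mul_nonneg hy.le (by linarith)
      have h8 : z.im = y := z_im t y
      nlinarith [h8]
    simpa using this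
  · -- lower bound on Re
    rw [re_cauchyTC hz]
    have h1 : 1/(2*(R+L)^2) * (ν (Set.Icc (-L) b)).toReal
        ≤ ∫ x in Set.Icc (-L) b, (z.re - x) / Complex.normSq (z - (x:ℂ)) ∂ν := by
      refine MeasureTheory.setIntegral_ge_of_const_le_real measurableSet_Icc (measure_ne_top _ _)
        ?_ (integrable_Q hz).integrableOn
      intro x hx
      obtain ⟨hx1, hx2⟩ := hx
      rw [hzdef, normSq_sub_real, z_re]
      rw [div_le_div_iff₀ (by positivity) (by nlinarith)]
      nlinarith
    have h2 : ∫ x in Set.Icc (-L) b, (z.re - x) / Complex.normSq (z - (x:ℂ)) ∂ν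
        ≤ ∫ x, (z.re - x) / Complex.normSq (z - (x:ℂ)) ∂ν := by
      refine MeasureTheory.setIntegral_le_integral (integrable_Q hz) ?_
      filter_upwards [hae] with x hx
      rw [hzdef, normSq_sub_real, z_re]
      have : 0 < t - x := by linarith
      positivity
    have h3 : 1/(4*(R+L)^2) ≤ 1/(2*(R+L)^2) * (ν (Set.Icc (-L) b)).toReal := by
      have h4 : 1/(4*(R+L)^2) = 1/(2*(R+L)^2) * (1/2) := by
        field_simp
        ring
      rw [h4]
      exact mul_le_mul_of_nonneg_left hmass (by positivity)
    linarith
  · -- upper bound on Re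
    rw [re_cauchyTC hz]
    have htb : (0:ℝ) < t - b := by linarith
    have h1 : ∫ x, (z.re - x) / Complex.normSq (z - (x:ℂ)) ∂ν ≤ ∫ _ : ℝ, (t-b)⁻¹ ∂ν := by
      refine integral_mono_ae (integrable_Q hz) (integrable_const _) ?_
      filter_upwards [hae] with x hx
      rw [hzdef, normSq_sub_real, z_re]
      rw [div_le_iff₀ (by nlinarith), inv_mul_eq_div, le_div_iff₀ htb]
      nlinarith
    simp only [integral_const, measure_univ, probReal_univ, ENNReal.toReal_one, one_smul, smul_eq_mul,
      one_mul] at h1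
    calc (∫ x, (z.re - x) / Complex.normSq (z - (x:ℂ)) ∂ν) * (t - b)
        ≤ (t-b)⁻¹ * (t-b) := mul_le_mul_of_nonneg_right h1 htb.le
      _ = 1 := by field_simp

lemma cover_null {μ : Measure ℝ} [IsProbabilityMeasure μ] {c R y0 C : ℝ}
    (hcR : c < R) (hy0 : 0 < y0) (hC : 0 ≤ C)
    (hball : ∀ t y : ℝ, 0 < y → y ≤ y0 → c ≤ t → t ≤ R →
      (μ (Set.Ioo (t-y) (t+y))).toReal ≤ C * y^2) :
    μ (Set.Ioc c R) = 0 := by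
  have hkey : ∀ ε : ℝ, 0 < ε → (μ (Set.Ioc c R)).toReal ≤ ε := by
    intro ε hε
    obtain ⟨n, hn⟩ := exists_nat_gt (max ((R-c)/y0) (C*(R-c)^2/ε))
    have hn1 : (0:ℕ) < n := by
      by_contra h
      push_neg at h
      interval_cases n
      simp only [Nat.cast_zero] at hn
      have := le_max_left ((R-c)/y0) (C*(R-c)^2/ε)
      have h1 : 0 < (R-c)/y0 := div_pos (by linarith) hy0
      have := le_max_left ((R-c)/y0) (C*(R-c)^2/ε)
      linarith [lt_of_lt_of_le h1 this]
    obtain ⟨y, hydef⟩ : ∃ y : ℝ, y = (R - c)/n := ⟨_, rfl⟩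
    have hnR : (0:ℝ) < n := by exact_mod_cast hn1
    have hy : 0 < y := hydef ▸ div_pos (by linarith) hnR
    have hyy0 : y ≤ y0 := by
      rw [hydef, div_le_iff₀ hnR]
      have h1 : (R-c)/y0 < n := lt_of_le_of_lt (le_max_left _ _) hn
      rw [div_lt_iff₀ hy0] at h1
      nlinarith
    -- covering
    have hcov : Set.Ioc c R ⊆ ⋃ i ∈ Finset.range n, Set.Ioo
        ((c + i*y + y/2) - y) ((c + i*y + y/2) + y) := by
      intro x hx
      obtain ⟨hx1, hx2⟩ := hx
      obtain ⟨s, hsdef⟩ : ∃ s : ℝ, s = (x - c)/y := ⟨_, rfl⟩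
      have hs0 : 0 < s := hsdef ▸ div_pos (by linarith) hy
      have hsn : s ≤ n := by
        rw [hsdef, div_le_iff₀ hy]
        rw [hydef]
        field_simp
        linarith
      have hxc : x - c = s * y := by rw [hsdef]; field_simp
      set i : ℕ := min (n-1) (⌊s⌋.toNat) with hidef
      have hin : i ∈ Finset.range n := by
        refine Finset.mem_range.mpr ?_
        have : i ≤ n - 1 := min_le_left _ _
        omega
      refine Set.mem_biUnion hin ?_
      have hfl : ((⌊s⌋.toNat : ℤ) : ℝ) = (⌊s⌋ : ℝ) := by
        have : (⌊s⌋.toNat : ℤ) = ⌊s⌋ := Int.toNat_of_nonneg (Int.floor_nonneg.mpr hs0.le)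
        exact_mod_cast congrArg (Int.cast : ℤ → ℝ) this
      have hmain : (i:ℝ)*y - y/2 < x - c ∧ x - c < (i:ℝ)*y + 3*(y/2) := by
        rcases le_or_gt (⌊s⌋.toNat) (n-1) with h | h
        · have hieq : i = ⌊s⌋.toNat := by omega
          have hi1 : (i:ℝ) ≤ s := by
            rw [hieq]
            calc ((⌊s⌋.toNat : ℕ):ℝ) = (⌊s⌋:ℝ) := by exact_mod_cast hfl
              _ ≤ s := Int.floor_le s
          have hi2 : s < (i:ℝ) + 1 := by
            rw [hieq]
            have h2 : s < (⌊s⌋:ℝ) + 1 := Int.lt_floor_add_one s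
            have h3 : ((⌊s⌋.toNat : ℕ):ℝ) = (⌊s⌋:ℝ) := by exact_mod_cast hfl
            linarith [h3 ▸ h2]
          constructor
          · nlinarith
          · nlinarith
        · have hige : (n:ℤ) ≤ ⌊s⌋ := by
            have h2 : n ≤ ⌊s⌋.toNat := by omega
            have h3 := Int.toNat_of_nonneg (Int.floor_nonneg.mpr hs0.le)
            omega
          have hsn' : (n:ℝ) ≤ s := by
            calc (n:ℝ) = ((n:ℤ):ℝ) := by norm_cast
              _ ≤ (⌊s⌋:ℝ) := by exact_mod_cast hige
              _ ≤ s := Int.floor_le s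
          have hseq : s = n := le_antisymm hsn hsn'
          have hieq : i = n - 1 := by omega
          have hic : (i:ℝ) = (n:ℝ) - 1 := by
            rw [hieq]
            have h4 : 1 ≤ n := hn1
            push_cast [h4]
            ring
          rw [hic]
          constructor
          · nlinarith
          · nlinarith
      simp only [Set.mem_Ioo]
      constructor
      · linarith [hmain.1]
      · linarith [hmain.2]
    -- sum the cover
    have hle : μ (Set.Ioc c R) ≤ ∑ i ∈ Finset.range n,
        μ (Set.Ioo ((c + i*y + y/2) - y) ((c + i*y + y/2) + y)) :=
      (measure_mono hcov).trans (measure_biUnion_finset_le _ _)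
    have hsumne : (∑ i ∈ Finset.range n,
        μ (Set.Ioo ((c + i*y + y/2) - y) ((c + i*y + y/2) + y))) ≠ ⊤ := by
      refine (ENNReal.sum_lt_top.mpr fun i _ => measure_lt_top _ _).ne
    have h2 : (μ (Set.Ioc c R)).toReal ≤ ∑ i ∈ Finset.range n,
        (μ (Set.Ioo ((c + i*y + y/2) - y) ((c + i*y + y/2) + y))).toReal := by
      rw [← ENNReal.toReal_sum fun i _ => measure_ne_top _ _]
      exact ENNReal.toReal_mono hsumne hle
    have h3 : ∑ i ∈ Finset.range n,
        (μ (Set.Ioo ((c + i*y + y/2) - y) ((c + i*y + y/2) + y))).toReal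
        ≤ ∑ _i ∈ Finset.range n, C * y^2 := by
      refine Finset.sum_le_sum fun i hi => ?_
      have hiy0 : 0 ≤ (i:ℝ)*y := mul_nonneg (Nat.cast_nonneg i) hy.le
      refine hball _ _ hy hyy0 (by linarith) ?_
      have hi' : (i:ℝ) ≤ (n:ℝ) - 1 := by
        have := Finset.mem_range.mp hi
        have h4 : i ≤ n - 1 := by omega
        have h5 : ((i:ℕ):ℝ) ≤ ((n-1:ℕ):ℝ) := by exact_mod_cast h4
        have h6 : ((n-1:ℕ):ℝ) = (n:ℝ) - 1 := by
          have h7 : 1 ≤ n := hn1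
          push_cast [h7]
          ring
        linarith [h6 ▸ h5]
      have hny : (n:ℝ) * y = R - c := by rw [hydef]; field_simp
      have hi2 := mul_le_mul_of_nonneg_right hi' hy.le
      linarith
    have h4 : ∑ _i ∈ Finset.range n, C * y^2 = n * (C * y^2) := by
      rw [Finset.sum_const, Finset.card_range, nsmul_eq_mul]
    have h5 : (n:ℝ) * (C * y^2) ≤ ε := by
      have hy2 : (n:ℝ) * (C * y^2) = C * (R-c)^2 / n := by
        rw [hydef]
        field_simp
      rw [hy2, div_le_iff₀ hnR]
      have h6 : C*(R-c)^2/ε < n := lt_of_le_of_lt (le_max_right _ _) hn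
      rw [div_lt_iff₀ hε] at h6
      nlinarith
    linarith
  have h0 : (μ (Set.Ioc c R)).toReal ≤ 0 := by
    refine le_of_forall_pos_le_add fun ε hε => ?_
    simpa using hkey ε hε
  have h1 : (μ (Set.Ioc c R)).toReal = 0 := le_antisymm h0 ENNReal.toReal_nonneg
  rcases (ENNReal.toReal_eq_zero_iff _).mp h1 with h | h
  · exact h
  · exact absurd h (measure_ne_top _ _)


end CTaux
namespace CTaux

set_option maxHeartbeats 2000000 in
lemma mu_Ioi_null {ν μ : Measure ℝ} [IsProbabilityMeasure ν] [IsProbabilityMeasure μ]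
    {b α : ℝ} (hα : 0 < α) (hb : ν (Set.Ioi b) = 0)
    (hK : ∀ z : ℂ, 0 < z.im → kTC μ z = ((1/α : ℝ):ℂ) * kTC ν z) :
    ∃ c : ℝ, b < c ∧ μ (Set.Ioi c) = 0 := by
  have hae := ae_le_of_Ioi_null hb
  obtain ⟨L, hL0, hLb, hmassE⟩ := exists_mass_Icc ν hb
  have hmass : (1/2:ℝ) ≤ (ν (Set.Icc (-L) b)).toReal := by
    have h := ENNReal.toReal_mono (measure_ne_top _ _) hmassE
    simpa using h
  obtain ⟨r, hrdef⟩ : ∃ r : ℝ, r = 1/α := ⟨_, rfl⟩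
  have hr : 0 < r := by rw [hrdef]; positivity
  obtain ⟨c, hcdef⟩ : ∃ c : ℝ, c = max (b+1) (r*(b+1)+1) := ⟨_, rfl⟩
  have hcb : b + 1 ≤ c := hcdef ▸ le_max_left _ _
  have hcr : r*(b+1)+1 ≤ c := hcdef ▸ le_max_right _ _
  refine ⟨c, by linarith, ?_⟩
  -- the key estimate
  have key : ∀ R : ℝ, c < R → μ (Set.Ioc c R) = 0 := by
    intro R hcR
    obtain ⟨g, hgdef⟩ : ∃ g : ℝ, g = 1/(4*(R+L)^2) := ⟨_, rfl⟩
    have hRL : 1 ≤ R + L := by linarith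
    have hg : 0 < g := by rw [hgdef]; positivity
    have hg2 : g ≤ 1/2 := by
      rw [hgdef, div_le_div_iff₀ (by positivity) (by norm_num)]
      nlinarith
    refine cover_null hcR (lt_min one_pos (by positivity) : (0:ℝ) < min 1 (g^2))
      (by positivity : (0:ℝ) ≤ 2*(1 + r*(1+1/g^2))) ?_
    intro t y hy hyy0 hct htR
    have hy1 : y ≤ 1 := le_trans hyy0 (min_le_left _ _)
    have hyg : y ≤ g^2 := le_trans hyy0 (min_le_right _ _)
    have htb : b + 1 ≤ t := by linarith
    obtain ⟨hB, hA, hA2⟩ := nu_bounds hae hL0 hLb hmass htb htR hy hy1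
    rw [← hgdef] at hA
    set z : ℂ := (t:ℂ) + (y:ℂ) * Complex.I with hzdef
    have hz : 0 < z.im := by rw [hzdef, z_im]; exact hy
    set A : ℝ := (cauchyTC ν z).re with hAdef
    set B : ℝ := (cauchyTC ν z).im with hBdef
    have hApos : 0 < A := lt_of_lt_of_le hg hA
    have hGν0 : cauchyTC ν z ≠ 0 := cauchyTC_ne_zero hz
    have hnsν : Complex.normSq (cauchyTC ν z) = A^2 + B^2 := by
      rw [Complex.normSq_apply, ← hAdef, ← hBdef]; ring
    have hns_pos : 0 < A^2 + B^2 := by nlinarith [sq_nonneg B]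
    set F : ℂ := (cauchyTC ν z)⁻¹ with hFdef
    have hFre : F.re = A/(A^2+B^2) := by rw [hFdef, Complex.inv_re, hnsν, hAdef]
    have hFim : F.im = -B/(A^2+B^2) := by rw [hFdef, Complex.inv_im, hnsν, hBdef]
    have hB2 : B^2 ≤ y^2 := by nlinarith [sq_abs B, abs_nonneg B]
    have hy2g : y^2 ≤ g^4 := by nlinarith
    -- Re F lower bound
    have key1 : 1/A - B^2/A^3 ≤ A/(A^2+B^2) := by
      have e : A/(A^2+B^2) - (1/A - B^2/A^3) = B^4/(A^3*(A^2+B^2)) := by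
        field_simp
        ring
      nlinarith [div_nonneg (by positivity : (0:ℝ) ≤ B^4) (by positivity : (0:ℝ) ≤ A^3*(A^2+B^2))]
    have key2 : (t-b) ≤ 1/A := (le_div_iff₀ hApos).mpr (by linarith)
    have key3 : B^2/A^3 ≤ 1/2 := by
      have h1 : B^2/A^3 ≤ g^4/g^3 := by
        refine div_le_div₀ (by positivity) (by linarith) (by positivity)
          (pow_le_pow_left₀ hg.le hA 3)
      have h2 : g^4/g^3 = g := by
        rw [div_eq_iff (by positivity)]; ring
      linarith
    have hFre_ge : (t-b) - 1/2 ≤ F.re := by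
      rw [hFre]; linarith
    -- Im F bound
    have hFim_bd : |F.im| ≤ y/g^2 := by
      rw [hFim, abs_div, abs_of_pos hns_pos, abs_neg]
      refine div_le_div₀ (by positivity) hB (by positivity) ?_
      nlinarith [sq_nonneg B]
    -- W
    set W : ℂ := z - ((r:ℝ):ℂ) * (z - F) with hWdef
    have hW : (cauchyTC μ z)⁻¹ = W := by
      have hk := hK z hz
      rw [kTC, kTC] at hk
      rw [hWdef, hFdef, ← hrdef] at *
      linear_combination -hk
    have hGμ : cauchyTC μ z = W⁻¹ := by rw [← hW, inv_inv]
    have hWre : W.re = t - r*(t - F.re) := by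
      rw [hWdef, hzdef]
      simp [Complex.sub_re, Complex.mul_re, Complex.ofReal_re, Complex.ofReal_im,
        Complex.add_re, Complex.add_im, Complex.mul_im, Complex.I_re, Complex.I_im]
    have hWim : W.im = y - r*(y - F.im) := by
      rw [hWdef, hzdef]
      simp [Complex.sub_im, Complex.mul_im, Complex.ofReal_re, Complex.ofReal_im,
        Complex.add_re, Complex.add_im, Complex.mul_re, Complex.I_re, Complex.I_im]
    have hWre1 : 1 ≤ W.re := by
      rw [hWre]
      have h1 : t - F.re ≤ b + 1/2 := by linarith
      have h2 : r*(t - F.re) ≤ r*(b+1/2) := mul_le_mul_of_nonneg_left h1 hr.le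
      nlinarith
    have hWim_bd : |W.im| ≤ (1 + r*(1+1/g^2)) * y := by
      rw [hWim]
      have h3 : |y - F.im| ≤ y + y/g^2 := by
        have h3a := abs_sub y F.im
        rw [abs_of_pos hy] at h3a
        linarith [hFim_bd]
      have h2 : |r*(y - F.im)| = r * |y - F.im| := by rw [abs_mul, abs_of_pos hr]
      have h1 : |y - r*(y - F.im)| ≤ |y| + |r*(y - F.im)| := abs_sub _ _
      rw [abs_of_pos hy, h2] at h1
      have h5 : r*|y - F.im| ≤ r*(y + y/g^2) := mul_le_mul_of_nonneg_left h3 hr.le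
      have h6 : (1 + r*(1+1/g^2))*y = y + r*(y + y/g^2) := by ring
      rw [h6]
      linarith
    have hnormW : 1 ≤ Complex.normSq W := by
      rw [Complex.normSq_apply]
      nlinarith [sq_nonneg W.im]
    have neg_im : -(cauchyTC μ z).im = W.im / Complex.normSq W := by
      rw [hGμ, Complex.inv_im]
      ring
    have bound : -(cauchyTC μ z).im ≤ (1 + r*(1+1/g^2)) * y := by
      rw [neg_im]
      calc W.im / Complex.normSq W ≤ |W.im| / Complex.normSq W :=
            (div_le_div_iff_of_pos_right (by linarith : (0:ℝ) < Complex.normSq W)).mpr (le_abs_self _)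
        _ ≤ |W.im| := div_le_self (abs_nonneg _) hnormW
        _ ≤ _ := hWim_bd
    have hball := ball_bound (ρ := μ) t hy
    rw [← hzdef] at hball
    calc (μ (Set.Ioo (t-y) (t+y))).toReal ≤ 2*y*(-(cauchyTC μ z).im) := hball
      _ ≤ 2*y*((1 + r*(1+1/g^2)) * y) := by
          refine mul_le_mul_of_nonneg_left bound (by positivity)
      _ = 2*(1 + r*(1+1/g^2))*y^2 := by ring
  -- union
  have hIoi : Set.Ioi c = ⋃ n : ℕ, Set.Ioc c (c + (n+1)) := by
    ext x
    simp only [Set.mem_Ioi, Set.mem_iUnion, Set.mem_Ioc]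
    constructor
    · intro hx
      obtain ⟨n, hn⟩ := exists_nat_gt (x - c)
      exact ⟨n, hx, by push_cast; linarith⟩
    · rintro ⟨n, hn, -⟩
      exact hn
  rw [hIoi]
  refine measure_iUnion_null fun n => key _ ?_
  have : (0:ℝ) < (n:ℝ) + 1 := by positivity
  linarith

end CTaux
namespace CTaux

lemma tendsto_cauchyTC {ρ : Measure ℝ} [IsProbabilityMeasure ρ] {c t : ℝ}
    (hc : ρ (Set.Ioi c) = 0) (ht : c < t) :
    Tendsto (fun y : ℝ => cauchyTC ρ ((t:ℂ) + (y:ℂ) * Complex.I)) (𝓝[>] 0)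
      (𝓝 ((cauchyT ρ t : ℝ) : ℂ)) := by
  have hae := ae_le_of_Ioi_null hc
  have hlim : (((cauchyT ρ t : ℝ)) : ℂ) = ∫ x, ((t:ℂ) - (x:ℂ))⁻¹ ∂ρ := by
    rw [cauchyT]
    calc ((∫ x, (t - x)⁻¹ ∂ρ : ℝ) : ℂ) = ∫ x, (((t - x)⁻¹ : ℝ) : ℂ) ∂ρ :=
          (integral_ofReal (𝕜 := ℂ)).symm
      _ = ∫ x, ((t:ℂ) - (x:ℂ))⁻¹ ∂ρ := by
          congr 1
          ext x
          push_cast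
          ring
  rw [hlim]
  refine MeasureTheory.tendsto_integral_filter_of_dominated_convergence
    (fun _ => (t - c)⁻¹) ?_ ?_ (integrable_const _) ?_
  · filter_upwards [self_mem_nhdsWithin] with y hy
    have hz : (0:ℝ) < ((t:ℂ) + (y:ℂ)*Complex.I).im := by rw [z_im]; exact hy
    exact (integrable_inv_complex (ρ := ρ) hz).1
  · filter_upwards [self_mem_nhdsWithin] with y hy
    filter_upwards [hae] with x hx
    have htx : 0 < t - x := by linarith
    rw [norm_inv]
    refine inv_anti₀ (by linarith) ?_
    calc t - c ≤ t - x := by linarith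
      _ = |((t:ℂ) + (y:ℂ)*Complex.I - (x:ℂ)).re| := by
          simp [abs_of_pos htx]
      _ ≤ ‖(t:ℂ) + (y:ℂ)*Complex.I - (x:ℂ)‖ := Complex.abs_re_le_norm _
  · filter_upwards [hae] with x hx
    have hne : (t:ℂ) - (x:ℂ) ≠ 0 := by
      intro h
      have := congrArg Complex.re h
      simp at this
      linarith
    have hcont : ContinuousAt (fun y : ℝ => ((t:ℂ) + (y:ℂ)*Complex.I - (x:ℂ))⁻¹) 0 := by
      refine ContinuousAt.inv₀ ?_ ?_
      · fun_prop
      · simpa using hne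
    have h0 : ((t:ℂ) + ((0:ℝ):ℂ)*Complex.I - (x:ℂ))⁻¹ = ((t:ℂ) - (x:ℂ))⁻¹ := by
      norm_num
    have := hcont.tendsto
    rw [h0] at this
    exact this.mono_left nhdsWithin_le_nhds

lemma kT_rel {ν μ : Measure ℝ} [IsProbabilityMeasure ν] [IsProbabilityMeasure μ]
    {b cμ α t : ℝ} (hα : 0 < α) (hbν : ν (Set.Ioi b) = 0) (hcμ : μ (Set.Ioi cμ) = 0)
    (hK : ∀ z : ℂ, 0 < z.im → kTC μ z = ((1/α : ℝ):ℂ) * kTC ν z)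
    (ht1 : b < t) (ht2 : cμ < t) :
    kT μ t = (1/α) * kT ν t := by
  have hGν := tendsto_cauchyTC hbν ht1
  have hGμ := tendsto_cauchyTC hcμ ht2
  have hGνt : cauchyT ν t ≠ 0 := (cauchyT_pos hbν ht1).ne'
  have hGμt : cauchyT μ t ≠ 0 := (cauchyT_pos hcμ ht2).ne'
  have hz : Tendsto (fun y : ℝ => (t:ℂ) + (y:ℂ)*Complex.I) (𝓝[>] 0) (𝓝 (t:ℂ)) := by
    have hcont : ContinuousAt (fun y : ℝ => (t:ℂ) + (y:ℂ)*Complex.I) 0 := by fun_prop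
    have := hcont.tendsto
    simp only [Complex.ofReal_zero, zero_mul, add_zero] at this
    exact this.mono_left nhdsWithin_le_nhds
  have h1 : Tendsto (fun y : ℝ => kTC μ ((t:ℂ) + (y:ℂ)*Complex.I)) (𝓝[>] 0)
      (𝓝 ((t:ℂ) - ((cauchyT μ t : ℝ) : ℂ)⁻¹)) := by
    exact hz.sub (hGμ.inv₀ (by exact_mod_cast hGμt))
  have h2 : Tendsto (fun y : ℝ => ((1/α : ℝ):ℂ) * kTC ν ((t:ℂ) + (y:ℂ)*Complex.I)) (𝓝[>] 0)
      (𝓝 (((1/α : ℝ):ℂ) * ((t:ℂ) - ((cauchyT ν t : ℝ) : ℂ)⁻¹))) := by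
    exact (hz.sub (hGν.inv₀ (by exact_mod_cast hGνt))).const_mul _
  have heq : (fun y : ℝ => kTC μ ((t:ℂ) + (y:ℂ)*Complex.I)) =ᶠ[𝓝[>] (0:ℝ)]
      (fun y : ℝ => ((1/α : ℝ):ℂ) * kTC ν ((t:ℂ) + (y:ℂ)*Complex.I)) := by
    filter_upwards [self_mem_nhdsWithin] with y hy
    exact hK _ (by rw [z_im]; exact hy)
  have h3 := tendsto_nhds_unique (h1.congr' heq) h2
  have h4 : (((kT μ t : ℝ)) : ℂ) = (((1/α * kT ν t : ℝ)) : ℂ) := by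
    rw [kT, kT]
    push_cast
    convert h3 using 2 <;> norm_num
  exact_mod_cast h4

lemma kMean_eq_kT {ρ : Measure ℝ} [IsProbabilityMeasure ρ] {c θ : ℝ}
    (hc : ρ (Set.Ioi c) = 0) (hθ : 0 < θ) (hθc : c < 1/θ) :
    kMean ρ θ = kT ρ (1/θ) := by
  have hG : 0 < cauchyT ρ (1/θ) := cauchyT_pos hc hθc
  have hM : Mgen ρ θ = θ⁻¹ * cauchyT ρ (1/θ) := by
    rw [Mgen, cauchyT, ← MeasureTheory.integral_const_mul]
    congr 1
    ext x
    have h1 : (1/θ) - x = (1-θ*x)/θ := by field_simp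
    rw [h1, inv_div, ← mul_div_assoc, inv_mul_cancel₀ hθ.ne', one_div]
  rw [kMean, kT, hM]
  field_simp
end CTaux
namespace CTaux

lemma inv_lt_inv' {u v : ℝ} (hu : 0 < u) (huv : u < v) : v⁻¹ < u⁻¹ := by
  have := one_div_lt_one_div_of_lt hu huv
  simpa [one_div] using this

lemma dirac_of_compl_null {ρ : Measure ℝ} [IsProbabilityMeasure ρ] {a : ℝ}
    (h : ρ ({a}ᶜ) = 0) : ρ = Measure.dirac a := by
  ext s hs
  rw [Measure.dirac_apply' _ hs]
  by_cases ha : a ∈ s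
  · have h1 : ρ sᶜ = 0 := measure_mono_null (fun x hx => by
      simp only [Set.mem_compl_iff, Set.mem_singleton_iff]
      intro hxa
      exact hx (hxa ▸ ha)) h
    have h2 := measure_add_measure_compl (μ := ρ) hs
    rw [h1, add_zero, measure_univ] at h2
    rw [h2]
    simp [Set.indicator_of_mem ha]
  · have h1 : ρ s = 0 := measure_mono_null (fun x hx => by
      simp only [Set.mem_compl_iff, Set.mem_singleton_iff]
      intro hxa
      exact ha (hxa ▸ hx)) h
    rw [h1]
    simp [Set.indicator_of_notMem ha]

lemma cov_strict {ρ : Measure ℝ} [IsProbabilityMeasure ρ]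
    (hnd : ∀ a : ℝ, ρ ≠ Measure.dirac a) {b t1 t2 : ℝ}
    (hae : ∀ᵐ x ∂ρ, x ≤ b) (h1 : b < t1) (h2 : b < t2) :
    (∫ x, (t1-x)⁻¹ ∂ρ) * (∫ x, (t2-x)⁻¹ ∂ρ) < ∫ x, (t1-x)⁻¹ * (t2-x)⁻¹ ∂ρ := by
  set f : ℝ → ℝ := fun x => (t1-x)⁻¹ with hfdef
  set g : ℝ → ℝ := fun x => (t2-x)⁻¹ with hgdef
  have hmf : Measurable f := (measurable_const.sub measurable_id).inv
  have hmg : Measurable g := (measurable_const.sub measurable_id).inv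
  have hf : Integrable f ρ := integrable_inv_shift hae h1
  have hg : Integrable g ρ := integrable_inv_shift hae h2
  have hfg : Integrable (fun x => f x * g x) ρ := by
    refine Integrable.mono' (integrable_const ((t1-b)⁻¹ * (t2-b)⁻¹)) ?_ ?_
    · exact (hmf.mul hmg).aestronglyMeasurable
    · filter_upwards [hae] with x hx
      have e1 : 0 < t1 - x := by linarith
      have e2 : 0 < t2 - x := by linarith
      rw [Real.norm_eq_abs, abs_of_pos (by positivity)]
      exact mul_le_mul (inv_anti₀ (by linarith) (by linarith))
        (inv_anti₀ (by linarith) (by linarith)) (le_of_lt (inv_pos.mpr e2))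
        (le_of_lt (inv_pos.mpr (by linarith : (0:ℝ) < t1 - b)))
  set If : ℝ := ∫ x, f x ∂ρ with hIf
  set Ig : ℝ := ∫ x, g x ∂ρ with hIg
  set Ifg : ℝ := ∫ x, f x * g x ∂ρ with hIfg
  -- bounds on f, g on the support
  have hfb : ∀ x : ℝ, x ≤ b → 0 < f x ∧ f x ≤ (t1-b)⁻¹ := fun x hx =>
    ⟨inv_pos.mpr (by linarith), inv_anti₀ (by linarith) (by linarith)⟩
  have hgb : ∀ x : ℝ, x ≤ b → 0 < g x ∧ g x ≤ (t2-b)⁻¹ := fun x hx =>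
    ⟨inv_pos.mpr (by linarith), inv_anti₀ (by linarith) (by linarith)⟩
  -- product measure
  set P : Measure (ℝ × ℝ) := ρ.prod ρ with hPdef
  have hPprob : IsProbabilityMeasure P := by rw [hPdef]; infer_instance
  set H : ℝ × ℝ → ℝ := fun p => (f p.1 - f p.2) * (g p.1 - g p.2) with hHdef
  have hmH : Measurable H :=
    ((hmf.comp measurable_fst).sub (hmf.comp measurable_snd)).mul
      ((hmg.comp measurable_fst).sub (hmg.comp measurable_snd))
  have haeP : ∀ᵐ p ∂P, p.1 ≤ b ∧ p.2 ≤ b := by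
    rw [MeasureTheory.ae_iff]
    have hsub : {p : ℝ × ℝ | ¬(p.1 ≤ b ∧ p.2 ≤ b)} ⊆
        (Set.Ioi b ×ˢ Set.univ) ∪ (Set.univ ×ˢ Set.Ioi b) := by
      intro p hp
      simp only [Set.mem_setOf_eq, not_and_or, not_le] at hp
      rcases hp with hp | hp
      · exact Or.inl ⟨hp, Set.mem_univ _⟩
      · exact Or.inr ⟨Set.mem_univ _, hp⟩
    have hb0 : ρ (Set.Ioi b) = 0 := by
      rw [MeasureTheory.ae_iff] at hae
      convert hae using 2
      ext x; simp [not_le]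
    refine measure_mono_null hsub ?_
    refine measure_union_null ?_ ?_
    · rw [hPdef, Measure.prod_prod, hb0, zero_mul]
    · rw [hPdef, Measure.prod_prod, hb0, mul_zero]
  have hintH : Integrable H P := by
    refine Integrable.mono' (integrable_const ((t1-b)⁻¹ * (t2-b)⁻¹)) ?_ ?_
    · exact hmH.aestronglyMeasurable
    · filter_upwards [haeP] with p hp
      obtain ⟨hp1, hp2⟩ := hp
      obtain ⟨hf1, hf1'⟩ := hfb _ hp1
      obtain ⟨hf2, hf2'⟩ := hfb _ hp2
      obtain ⟨hg1, hg1'⟩ := hgb _ hp1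
      obtain ⟨hg2, hg2'⟩ := hgb _ hp2
      rw [Real.norm_eq_abs, hHdef, abs_mul]
      have a1 : |f p.1 - f p.2| ≤ (t1-b)⁻¹ := by rw [abs_le]; constructor <;> linarith
      have a2 : |g p.1 - g p.2| ≤ (t2-b)⁻¹ := by rw [abs_le]; constructor <;> linarith
      exact mul_le_mul a1 a2 (abs_nonneg _)
        (le_of_lt (inv_pos.mpr (by linarith : (0:ℝ) < t1 - b)))
  -- Fubini
  have inner : ∀ x : ℝ, ∫ y, (f x - f y) * (g x - g y) ∂ρ
      = f x * g x - f x * Ig - g x * If + Ifg := by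
    intro x
    have i1 : Integrable (fun y => f x * g y) ρ := hg.const_mul _
    have i2 : Integrable (fun y => g x * f y) ρ := hf.const_mul _
    have i3 : Integrable (fun y => f y * g y) ρ := hfg
    calc ∫ y, (f x - f y) * (g x - g y) ∂ρ
        = ∫ y, ((f x * g x - f x * g y) - (g x * f y - f y * g y)) ∂ρ := by
          congr 1; ext y; ring
      _ = (∫ y, (f x * g x - f x * g y) ∂ρ) - ∫ y, (g x * f y - f y * g y) ∂ρ :=
          integral_sub ((integrable_const _).sub i1) (i2.sub i3)
      _ = (f x * g x - f x * Ig) - (g x * If - Ifg) := by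
          have e1 : ∫ y, f x * g y ∂ρ = f x * Ig := by rw [integral_const_mul, hIg]
          have e2 : ∫ y, g x * f y ∂ρ = g x * If := by rw [integral_const_mul, hIf]
          rw [integral_sub (integrable_const _) i1, integral_sub i2 i3, e1, e2,
            integral_const, hIfg]
          simp [measure_univ]
      _ = f x * g x - f x * Ig - g x * If + Ifg := by ring
  have hHint : ∫ p, H p ∂P = 2 * (Ifg - If * Ig) := by
    rw [hPdef, MeasureTheory.integral_prod _ hintH]
    have : ∀ x : ℝ, ∫ y, H (x, y) ∂ρ = f x * g x - f x * Ig - g x * If + Ifg := by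
      intro x
      exact inner x
    rw [integral_congr_ae (Eventually.of_forall this)]
    have o2 : Integrable (fun x => f x * Ig) ρ := hf.mul_const _
    have o3 : Integrable (fun x => g x * If) ρ := hg.mul_const _
    have oA : Integrable (fun x => f x * g x - f x * Ig) ρ := hfg.sub o2
    have oB : Integrable (fun x => f x * g x - f x * Ig - g x * If) ρ := oA.sub o3
    have e1 : ∫ x, f x * Ig ∂ρ = If * Ig := by rw [integral_mul_const, hIf]
    have e2 : ∫ x, g x * If ∂ρ = Ig * If := by rw [integral_mul_const, hIg]
    rw [integral_add oB (integrable_const _), integral_sub oA o3, integral_sub hfg o2,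
      e1, e2, integral_const, hIfg]
    simp only [measure_univ, probReal_univ, ENNReal.toReal_one, smul_eq_mul, one_mul]
    ring
  -- nonnegativity
  have haeH : 0 ≤ᵐ[P] H := by
    filter_upwards [haeP] with p hp
    obtain ⟨hp1, hp2⟩ := hp
    rcases le_total p.1 p.2 with hle | hle
    · have e1 : f p.1 - f p.2 ≤ 0 := by
        have := inv_anti₀ (show (0:ℝ) < t1 - p.2 by linarith) (by linarith : t1 - p.2 ≤ t1 - p.1)
        simp only [hfdef]; linarith
      have e2 : g p.1 - g p.2 ≤ 0 := by
        have := inv_anti₀ (show (0:ℝ) < t2 - p.2 by linarith) (by linarith : t2 - p.2 ≤ t2 - p.1)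
        simp only [hgdef]; linarith
      exact mul_nonneg_of_nonpos_of_nonpos e1 e2
    · have e1 : 0 ≤ f p.1 - f p.2 := by
        have := inv_anti₀ (show (0:ℝ) < t1 - p.1 by linarith) (by linarith : t1 - p.1 ≤ t1 - p.2)
        simp only [hfdef]; linarith
      have e2 : 0 ≤ g p.1 - g p.2 := by
        have := inv_anti₀ (show (0:ℝ) < t2 - p.1 by linarith) (by linarith : t2 - p.1 ≤ t2 - p.2)
        simp only [hgdef]; linarith
      exact mul_nonneg e1 e2
  -- main contradiction argument
  by_contra hcon
  push_neg at hcon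
  have hint0 : ∫ p, H p ∂P = 0 := by
    have hle : ∫ p, H p ∂P ≤ 0 := by rw [hHint]; nlinarith
    exact le_antisymm hle (integral_nonneg_of_ae haeH)
  have hH0 : H =ᵐ[P] 0 := (integral_eq_zero_iff_of_nonneg_ae haeH hintH).mp hint0
  have hdiag : ∀ᵐ p ∂P, p.1 = p.2 := by
    filter_upwards [hH0, haeP] with p hp hpb
    obtain ⟨hp1, hp2⟩ := hpb
    by_contra hne
    rcases lt_or_gt_of_ne hne with hlt | hlt
    · have e1 : f p.1 - f p.2 < 0 := by
        have := inv_lt_inv' (show (0:ℝ) < t1 - p.2 by linarith) (by linarith : t1 - p.2 < t1 - p.1)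
        simp only [hfdef]; linarith
      have e2 : g p.1 - g p.2 < 0 := by
        have := inv_lt_inv' (show (0:ℝ) < t2 - p.2 by linarith) (by linarith : t2 - p.2 < t2 - p.1)
        simp only [hgdef]; linarith
      have := mul_pos_of_neg_of_neg e1 e2
      rw [hHdef] at hp
      simp only [Pi.zero_apply] at hp
      linarith [this, hp.le, hp.ge]
    · have e1 : 0 < f p.1 - f p.2 := by
        have := inv_lt_inv' (show (0:ℝ) < t1 - p.1 by linarith) (by linarith : t1 - p.1 < t1 - p.2)
        simp only [hfdef]; linarith
      have e2 : 0 < g p.1 - g p.2 := by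
        have := inv_lt_inv' (show (0:ℝ) < t2 - p.1 by linarith) (by linarith : t2 - p.1 < t2 - p.2)
        simp only [hgdef]; linarith
      have := mul_pos e1 e2
      rw [hHdef] at hp
      simp only [Pi.zero_apply] at hp
      linarith [this, hp.le, hp.ge]
  have hset : P {p : ℝ × ℝ | p.1 ≠ p.2} = 0 := by
    rw [MeasureTheory.ae_iff] at hdiag
    convert hdiag using 2
  have hmeas : MeasurableSet {p : ℝ × ℝ | p.1 ≠ p.2} :=
    (measurableSet_eq_fun measurable_fst measurable_snd).compl
  rw [hPdef, Measure.measure_prod_null hmeas] at hset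
  have hex : ∃ x : ℝ, ρ (Prod.mk x ⁻¹' {p : ℝ × ℝ | p.1 ≠ p.2}) = 0 := by
    have hne : (MeasureTheory.ae ρ).NeBot := MeasureTheory.ae_neBot.mpr
      (IsProbabilityMeasure.ne_zero ρ)
    obtain ⟨x, hx⟩ := hset.exists
    exact ⟨x, hx⟩
  obtain ⟨x0, hx0⟩ := hex
  have hpre : Prod.mk x0 ⁻¹' {p : ℝ × ℝ | p.1 ≠ p.2} = {x0}ᶜ := by
    ext y
    simp [eq_comm, ne_comm]
  rw [hpre] at hx0
  exact hnd x0 (dirac_of_compl_null hx0)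

end CTaux
namespace CTaux

lemma kMean_lt {ν : Measure ℝ} [IsProbabilityMeasure ν]
    (hnd : ∀ a : ℝ, ν ≠ Measure.dirac a) {b θ1 θ2 : ℝ}
    (hb : ν (Set.Ioi b) = 0) (h0 : 0 < θ1) (h12 : θ1 < θ2) (hb2 : b < 1/θ2) :
    kMean ν θ1 < kMean ν θ2 := by
  have hae := ae_le_of_Ioi_null hb
  have hθ2 : 0 < θ2 := h0.trans h12
  have ht21 : 1/θ2 < 1/θ1 := one_div_lt_one_div_of_lt h0 h12
  have hb1 : b < 1/θ1 := hb2.trans ht21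
  have hG1 : 0 < cauchyT ν (1/θ1) := cauchyT_pos hb hb1
  have hG2 : 0 < cauchyT ν (1/θ2) := cauchyT_pos hb hb2
  have hcov := cov_strict hnd hae hb1 hb2
  have hint1 : Integrable (fun x : ℝ => (1/θ1 - x)⁻¹) ν := integrable_inv_shift hae hb1
  have hint2 : Integrable (fun x : ℝ => (1/θ2 - x)⁻¹) ν := integrable_inv_shift hae hb2
  have hdiff : cauchyT ν (1/θ2) - cauchyT ν (1/θ1)
      = (1/θ1 - 1/θ2) * ∫ x, (1/θ1 - x)⁻¹ * (1/θ2 - x)⁻¹ ∂ν := by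
    rw [cauchyT, cauchyT, ← integral_sub hint2 hint1, ← MeasureTheory.integral_const_mul]
    refine integral_congr_ae ?_
    filter_upwards [hae] with x hx
    have e1 : 1/θ1 - x ≠ 0 := by
      have : (0:ℝ) < 1/θ1 - x := by linarith
      linarith
    have e2 : 1/θ2 - x ≠ 0 := by
      have : (0:ℝ) < 1/θ2 - x := by linarith
      linarith
    calc (1/θ2 - x)⁻¹ - (1/θ1 - x)⁻¹
        = ((1/θ1 - x) - (1/θ2 - x)) / ((1/θ2 - x) * (1/θ1 - x)) := inv_sub_inv e2 e1
      _ = (1/θ1 - 1/θ2) * ((1/θ1 - x)⁻¹ * (1/θ2 - x)⁻¹) := by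
          rw [div_eq_mul_inv, mul_inv]
          ring
  rw [kMean_eq_kT hb h0 hb1, kMean_eq_kT hb hθ2 hb2, kT, kT]
  have e : (cauchyT ν (1/θ1))⁻¹ - (cauchyT ν (1/θ2))⁻¹
      = (cauchyT ν (1/θ2) - cauchyT ν (1/θ1))/(cauchyT ν (1/θ1) * cauchyT ν (1/θ2)) := by
    field_simp
  have hq : 1 < (∫ x, (1/θ1 - x)⁻¹ * (1/θ2 - x)⁻¹ ∂ν)
      / (cauchyT ν (1/θ1) * cauchyT ν (1/θ2)) :=
    (one_lt_div (by positivity)).mpr (by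
      calc cauchyT ν (1/θ1) * cauchyT ν (1/θ2)
          = (∫ x, (1/θ1 - x)⁻¹ ∂ν) * ∫ x, (1/θ2 - x)⁻¹ ∂ν := rfl
        _ < _ := hcov)
  have hkey : 1/θ1 - 1/θ2 < (cauchyT ν (1/θ1))⁻¹ - (cauchyT ν (1/θ2))⁻¹ := by
    rw [e, hdiff, mul_div_assoc]
    nlinarith [mul_lt_mul_of_pos_left hq (by linarith : (0:ℝ) < 1/θ1 - 1/θ2)]
  linarith

lemma continuousAt_cauchyT {ρ : Measure ℝ} [IsProbabilityMeasure ρ] {c t : ℝ}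
    (hc : ρ (Set.Ioi c) = 0) (ht : c < t) : ContinuousAt (cauchyT ρ) t := by
  have hae := ae_le_of_Ioi_null hc
  refine MeasureTheory.continuousAt_of_dominated ?_ ?_
    (integrable_const (((t-c)/2)⁻¹)) ?_
  · exact Eventually.of_forall fun s =>
      ((measurable_const.sub measurable_id).inv).aestronglyMeasurable
  · have hmem : Set.Ioo (t - (t-c)/2) (t + (t-c)/2) ∈ 𝓝 t :=
      Ioo_mem_nhds (by linarith) (by linarith)
    filter_upwards [hmem] with s hs
    filter_upwards [hae] with x hx
    obtain ⟨hs1, hs2⟩ := hs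
    have hsx : (t-c)/2 ≤ s - x := by linarith
    rw [Real.norm_eq_abs, abs_of_pos (inv_pos.mpr (by linarith))]
    exact inv_anti₀ (by linarith) hsx
  · filter_upwards [hae] with x hx
    exact ContinuousAt.inv₀ (by fun_prop)
      (by intro h; linarith [sub_eq_zero.mp h, hx, ht])

lemma continuousAt_kMean {ν : Measure ℝ} [IsProbabilityMeasure ν] {b θ : ℝ}
    (hb : ν (Set.Ioi b) = 0) (hθ : 0 < θ) (hbθ : b < 1/θ) :
    ContinuousAt (kMean ν) θ := by
  have hc : ContinuousAt (fun s : ℝ => s * b) θ := by fun_prop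
  have hθb : θ * b < 1 := by
    have h := mul_lt_mul_of_pos_left hbθ hθ
    rw [mul_one_div, div_self hθ.ne'] at h
    exact h
  have h1 : ∀ᶠ s in 𝓝 θ, s * b < 1 := hc.eventually_lt continuousAt_const hθb
  have h2 : ∀ᶠ s in 𝓝 θ, 0 < s := eventually_gt_nhds hθ
  have heq : (fun s => 1/s - (cauchyT ν (1/s))⁻¹) =ᶠ[𝓝 θ] kMean ν := by
    filter_upwards [h1, h2] with s hs1 hs2
    have hbs : b < 1/s := by
      rw [lt_div_iff₀ hs2]
      nlinarith
    rw [kMean_eq_kT hb hs2 hbs, kT]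
  refine ContinuousAt.congr ?_ heq
  have g1 : ContinuousAt (fun s : ℝ => 1/s) θ :=
    ContinuousAt.div continuousAt_const continuousAt_id hθ.ne'
  have g2 : ContinuousAt (cauchyT ν) (1/θ) := continuousAt_cauchyT hb hbθ
  have g3 : ContinuousAt (fun s : ℝ => cauchyT ν (1/s)) θ := g2.comp g1
  have g4 : cauchyT ν (1/θ) ≠ 0 := (cauchyT_pos hb hbθ).ne'
  exact g1.sub (g3.inv₀ (by simpa using g4))

end CTaux
set_option maxHeartbeats 1000000 in
/-- let `ν` be a non-degenerate probability measure with support bounded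
from above, `α > 0`, `μ = ν^{⊎(1/α)}` the boolean convolution power (characterized by
`K_μ = (1/α) K_ν` on the upper half-plane), and `σ = μ^{⊞α} = (ν^{⊎1/α})^{⊞α}` the
free convolution power (encoded through its defining properties: support bounded from
above, `m₀(σ) = α m₀(μ)`, and pseudo-variance `𝕍_σ(m) = α 𝕍_μ(m/α)` near `α m₀(μ)`).
Then `σ` has support bounded from above, `𝕍_σ(m) = 𝕍_ν(m) + (1 - 1/α) m²` in a right
neighborhood of `m₀(ν)`, and (the mean `m₀ = m₀(ν)` being finite) the variance
functions exist and `V_σ(m) = V_ν(m) + (1 - 1/α) m (m - m₀)` in a right neighborhood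
of `m₀`. -/
theorem boolean_then_free_power_variance
    (ν μ σ : Measure ℝ)
    [IsProbabilityMeasure ν] [IsProbabilityMeasure μ] [IsProbabilityMeasure σ]
    (hnd : ∀ a : ℝ, ν ≠ Measure.dirac a)
    (b : ℝ) (hb : ν (Set.Ioi b) = 0)
    (α : ℝ) (hα : 0 < α)
    (m0 : ℝ) (hm0 : Tendsto (kMean ν) (𝓝[>] (0 : ℝ)) (𝓝 m0))
    (ψν ψμ ψσ : ℝ → ℝ)
    (hψν : ∀ θ : ℝ, 0 < θ → θ * Bv ν < 1 → ψν (kMean ν θ) = θ)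
    (hψμ : ∀ θ : ℝ, 0 < θ → θ * Bv μ < 1 → ψμ (kMean μ θ) = θ)
    (hψσ : ∀ θ : ℝ, 0 < θ → θ * Bv σ < 1 → ψσ (kMean σ θ) = θ)
    -- `μ = ν^{⊎(1/α)}`:
    (hK : ∀ z : ℂ, 0 < z.im → kTC μ z = ((1 / α : ℝ) : ℂ) * kTC ν z)
    (m0μ : ℝ) (hm0μ : Tendsto (kMean μ) (𝓝[>] (0 : ℝ)) (𝓝 m0μ))
    -- `σ = μ^{⊞α}`:
    (hσsupp : ∃ c : ℝ, σ (Set.Ioi c) = 0)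
    (hσmean : Tendsto (kMean σ) (𝓝[>] (0 : ℝ)) (𝓝 (α * m0μ)))
    (hσfree : ∃ ε > 0, ∀ m : ℝ, α * m0μ < m → m < α * m0μ + ε →
      pseudoVar ψσ m = α * pseudoVar ψμ (m / α)) :
    (∃ c : ℝ, σ (Set.Ioi c) = 0) ∧
    (∃ ε > 0, ∀ m : ℝ, m0 < m → m < m0 + ε →
      pseudoVar ψσ m = pseudoVar ψν m + (1 - 1 / α) * m ^ 2) ∧
    (∃ ε > 0, ∃ Vν Vσ : ℝ → ℝ,
      (∀ m : ℝ, m0 < m → m < m0 + ε →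
        pseudoVar ψν m / m = Vν m / (m - m0)) ∧
      (∀ m : ℝ, m0 < m → m < m0 + ε →
        pseudoVar ψσ m / m = Vσ m / (m - m0)) ∧
      (∀ m : ℝ, m0 < m → m < m0 + ε →
        Vσ m = Vν m + (1 - 1 / α) * m * (m - m0))) := by
  obtain ⟨cμ, hcμb, hcμ⟩ := CTaux.mu_Ioi_null hα hb hK
  obtain ⟨T, hTdef⟩ : ∃ T : ℝ, T = max (max b cμ) (max (Bv ν) (Bv μ)) + 1 := ⟨_, rfl⟩
  have hBvν : Bv ν ≤ T - 1 := by
    rw [hTdef]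
    have := le_max_left (Bv ν) (Bv μ)
    have := le_max_right (max b cμ) (max (Bv ν) (Bv μ))
    linarith
  have hBvμ : Bv μ ≤ T - 1 := by
    rw [hTdef]
    have := le_max_right (Bv ν) (Bv μ)
    have := le_max_right (max b cμ) (max (Bv ν) (Bv μ))
    linarith
  have hbT : b < T := by
    rw [hTdef]
    have := le_max_left b cμ
    have := le_max_left (max b cμ) (max (Bv ν) (Bv μ))
    linarith
  have hcμT : cμ < T := by
    rw [hTdef]
    have := le_max_right b cμ
    have := le_max_left (max b cμ) (max (Bv ν) (Bv μ))
    linarith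
  have hT0 : 0 < T := by
    have h1 : (0:ℝ) ≤ Bv ν := Bv_nonneg ν
    linarith
  obtain ⟨δ, hδdef⟩ : ∃ δ : ℝ, δ = 1/T := ⟨_, rfl⟩
  have hδ : 0 < δ := by rw [hδdef]; positivity
  have hfacts : ∀ θ : ℝ, 0 < θ → θ < δ →
      b < 1/θ ∧ cμ < 1/θ ∧ θ * Bv ν < 1 ∧ θ * Bv μ < 1 := by
    intro θ hθ hθδ
    have h1 : T < 1/θ := by
      have h2 : 1/δ < 1/θ := one_div_lt_one_div_of_lt hθ hθδ
      rw [hδdef, one_div_one_div] at h2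
      exact h2
    have hθT : θ * T < 1 := by
      rw [hδdef] at hθδ
      exact (lt_div_iff₀ hT0).mp hθδ
    refine ⟨by linarith, by linarith, ?_, ?_⟩
    · have := mul_le_mul_of_nonneg_left hBvν hθ.le
      nlinarith
    · have := mul_le_mul_of_nonneg_left hBvμ hθ.le
      nlinarith
  have hrel : ∀ θ : ℝ, 0 < θ → θ < δ → kMean μ θ = (1/α) * kMean ν θ := by
    intro θ h1 h2
    obtain ⟨f1, f2, -, -⟩ := hfacts θ h1 h2
    rw [CTaux.kMean_eq_kT hcμ h1 f2, CTaux.kMean_eq_kT hb h1 f1]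
    exact CTaux.kT_rel hα hb hcμ hK f1 f2
  -- identification of m0μ
  have hm0μ' : Tendsto (kMean μ) (𝓝[>] (0:ℝ)) (𝓝 ((1/α) * m0)) := by
    refine Tendsto.congr' ?_ (hm0.const_mul (1/α))
    filter_upwards [Ioo_mem_nhdsGT hδ] with θ hθ
    exact (hrel θ hθ.1 hθ.2).symm
  have hm0μeq : m0μ = (1/α) * m0 := tendsto_nhds_unique hm0μ hm0μ'
  have hαm0 : α * m0μ = m0 := by
    rw [hm0μeq]
    field_simp
  obtain ⟨ε2, hε2, hfree⟩ := hσfree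
  -- strict increase beyond m0
  have hm0lt : m0 < kMean ν (δ/2) := by
    have h6 : kMean ν (δ/4) < kMean ν (δ/2) :=
      CTaux.kMean_lt hnd hb (by positivity) (by linarith) (hfacts (δ/2) (by positivity) (by linarith)).1
    have h4 : ∀ᶠ s in 𝓝[>] (0:ℝ), kMean ν s ≤ kMean ν (δ/4) := by
      filter_upwards [Ioo_mem_nhdsGT (by positivity : (0:ℝ) < δ/4)] with s hs
      exact (CTaux.kMean_lt hnd hb hs.1 hs.2 (hfacts (δ/4) (by positivity) (by linarith)).1).le
    have h5 : m0 ≤ kMean ν (δ/4) := le_of_tendsto hm0 h4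
    linarith
  obtain ⟨ε, hε, hkey⟩ : ∃ ε > 0, ∀ m : ℝ, m0 < m → m < m0 + ε →
      pseudoVar ψσ m = pseudoVar ψν m + (1 - 1/α) * m^2 := by
    refine ⟨min (kMean ν (δ/2) - m0) ε2, lt_min (by linarith) hε2, ?_⟩
    intro m hm1 hm2
    have hmlt : m < kMean ν (δ/2) := by
      have := min_le_left (kMean ν (δ/2) - m0) ε2
      linarith
    have hev : ∀ᶠ s in 𝓝[>] (0:ℝ), kMean ν s < m ∧ s ∈ Set.Ioo (0:ℝ) (δ/2) := by
      refine Eventually.and ?_ (Ioo_mem_nhdsGT (by positivity))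
      exact hm0.eventually (eventually_lt_nhds hm1)
    obtain ⟨θ0, hθ0m, hθ0mem⟩ := hev.exists
    have hθ0pos : 0 < θ0 := hθ0mem.1
    have hθ0lt : θ0 < δ/2 := hθ0mem.2
    have hconts : ContinuousOn (kMean ν) (Set.Icc θ0 (δ/2)) := by
      intro s hs
      have hspos : 0 < s := lt_of_lt_of_le hθ0pos hs.1
      have hsδ : s < δ := lt_of_le_of_lt hs.2 (by linarith)
      exact (CTaux.continuousAt_kMean hb hspos (hfacts s hspos hsδ).1).continuousWithinAt
    have hIVT := intermediate_value_Icc hθ0lt.le hconts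
    obtain ⟨θ, hθIcc, hθm⟩ := hIVT ⟨hθ0m.le, hmlt.le⟩
    have hθpos : 0 < θ := lt_of_lt_of_le hθ0pos hθIcc.1
    have hθδ : θ < δ := lt_of_le_of_lt hθIcc.2 (by linarith)
    obtain ⟨-, -, hBν1, hBμ1⟩ := hfacts θ hθpos hθδ
    have hψνm : ψν m = θ := by rw [← hθm]; exact hψν θ hθpos hBν1
    have hkμ : kMean μ θ = m/α := by
      rw [hrel θ hθpos hθδ, hθm]
      ring
    have hψμm : ψμ (m/α) = θ := by
      rw [← hkμ]
      exact hψμ θ hθpos hBμ1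
    have hfree' := hfree m (by rw [hαm0]; exact hm1)
      (by rw [hαm0]; have := min_le_right (kMean ν (δ/2) - m0) ε2; linarith)
    rw [hfree']
    simp only [pseudoVar]
    rw [hψνm, hψμm]
    field_simp
    ring
  refine ⟨hσsupp, ⟨ε, hε, hkey⟩,
    ⟨ε, hε, fun m => pseudoVar ψν m / m * (m - m0), fun m => pseudoVar ψσ m / m * (m - m0),
      ?_, ?_, ?_⟩⟩
  · intro m hm1 hm2
    show pseudoVar ψν m / m = pseudoVar ψν m / m * (m - m0) / (m - m0)
    rw [mul_div_cancel_right₀ _ (sub_ne_zero.mpr (ne_of_gt hm1))]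
  · intro m hm1 hm2
    show pseudoVar ψσ m / m = pseudoVar ψσ m / m * (m - m0) / (m - m0)
    rw [mul_div_cancel_right₀ _ (sub_ne_zero.mpr (ne_of_gt hm1))]
  · intro m hm1 hm2
    have h2 := hkey m hm1 hm2
    show pseudoVar ψσ m / m * (m - m0)
      = pseudoVar ψν m / m * (m - m0) + (1 - 1/α) * m * (m - m0)
    by_cases hm0' : m = 0
    · subst hm0'
      simp [pseudoVar]
    · rw [h2]
      field_simp
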